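/- Consider the scaling function μ(t) = T^{1+m}/(T − t)^{1+m} on [0, T) with T > 0 and m a positive integer. If V : [0, T) → ℝ is nonnegative, differentiable, and V'(t) ≤ −2k μ(t) V(t) + (μ(t)/(4λ)) d(t)² with k, λ > 0 and |d(t)| ≤ σ, then μ(t)² x(t)² remains bounded provided V(t) = μ(t)² x(t)²/2 along a scalar signal x, and in particular |x(t)| ≤ (1/μ(t))·C for some constant C depending on x(0), σ, k, λ; hence x(t) → 0 as t → T⁻. -/
import Mathlib


open Set Filter Topology Real

theorem polynomial_scaling_convergence (T k lam σ : ℝ) (m : ℕ)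
    (hT : 0 < T) (hm : 0 < m) (hk : 0 < k) (hlam : 0 < lam) (hσ : 0 < σ)
    (μ : ℝ → ℝ) (hμ : ∀ t, μ t = T ^ (1 + m) / (T - t) ^ (1 + m))
    (x d V V' : ℝ → ℝ)
    (hx : ∀ t ∈ Ico (0:ℝ) T, DifferentiableAt ℝ x t)
    (hV : ∀ t, V t = μ t ^ 2 * x t ^ 2 / 2)
    (hV' : ∀ t ∈ Ico (0:ℝ) T, HasDerivAt V (V' t) t)
    (hineq : ∀ t ∈ Ico (0:ℝ) T,
      V' t ≤ -2 * k * μ t * V t + μ t / (4 * lam) * d t ^ 2)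
    (hd : ∀ t ∈ Ico (0:ℝ) T, |d t| ≤ σ) :
    (∃ C : ℝ, ∀ t ∈ Ico (0:ℝ) T, |x t| ≤ C / μ t) ∧
    Tendsto x (𝓝[<] T) (𝓝 0) := by
  set M : ℝ := max (V 0) (σ ^ 2 / (8 * k * lam)) with hM
  have hμpos : ∀ t ∈ Ico (0:ℝ) T, 0 < μ t := by
    intro t ht
    rw [hμ t]
    have h1 : 0 < T - t := by linarith [ht.2]
    positivity
  have hMσ : σ ^ 2 / (8 * k * lam) ≤ M := le_max_right _ _
  have hM0 : 0 < M := lt_of_lt_of_le (by positivity) hMσ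
  -- Main bound: V t ≤ M on [0, T)
  have hVle : ∀ t ∈ Ico (0:ℝ) T, V t ≤ M := by
    intro t ht
    have hsub : Icc (0:ℝ) t ⊆ Ico (0:ℝ) T := fun s hs => ⟨hs.1, lt_of_le_of_lt hs.2 ht.2⟩
    have hcont : ContinuousOn V (Icc 0 t) := fun s hs =>
      ((hV' s (hsub hs)).continuousAt).continuousWithinAt
    have hderiv : ∀ s ∈ Ico (0:ℝ) t, HasDerivWithinAt V (V' s) (Ici s) s := fun s hs =>
      (hV' s (hsub ⟨hs.1, hs.2.le⟩)).hasDerivWithinAt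
    have key : ∀ ε > 0, V t ≤ M + ε := by
      intro ε hε
      have := image_le_of_deriv_right_lt_deriv_boundary (B := fun _ => M + ε)
        (B' := fun _ => 0) hcont hderiv
        (show V 0 ≤ M + ε from le_trans (le_max_left _ _) (by linarith))
        (fun s => hasDerivAt_const s (M + ε)) ?_ (right_mem_Icc.2 ht.1)
      · exact this
      · intro s hs hVs
        have hsmem := hsub ⟨hs.1, hs.2.le⟩
        have hμs := hμpos s hsmem
        have hds : d s ^ 2 ≤ σ ^ 2 := by
          have := hd s hsmem
          nlinarith [abs_nonneg (d s), sq_abs (d s)]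
        have h1 : V' s ≤ μ s * (-2 * k * (M + ε) + σ ^ 2 / (4 * lam)) := by
          have := hineq s hsmem
          rw [hVs] at this
          have h2 : μ s / (4 * lam) * d s ^ 2 ≤ μ s / (4 * lam) * σ ^ 2 := by
            apply mul_le_mul_of_nonneg_left hds
            positivity
          calc V' s ≤ -2 * k * μ s * (M + ε) + μ s / (4 * lam) * σ ^ 2 := by linarith
            _ = μ s * (-2 * k * (M + ε) + σ ^ 2 / (4 * lam)) := by ring
        have hσ2 : σ ^ 2 ≤ M * (8 * k * lam) := (div_le_iff₀ (by positivity)).1 hMσ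
        have h4 : σ ^ 2 / (4 * lam) ≤ 2 * k * M := by
          rw [div_le_iff₀ (by positivity)]; nlinarith
        have h3 : -2 * k * (M + ε) + σ ^ 2 / (4 * lam) ≤ -2 * k * ε := by nlinarith
        calc V' s ≤ μ s * (-2 * k * ε) := le_trans h1 (mul_le_mul_of_nonneg_left h3 hμs.le)
          _ < 0 := by nlinarith [mul_pos hμs (mul_pos hk hε)]
    linarith [le_of_forall_pos_le_add key]
  set C : ℝ := Real.sqrt (2 * M) with hC
  have hbound : ∀ t ∈ Ico (0:ℝ) T, |x t| ≤ C / μ t := by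
    intro t ht
    have hμt := hμpos t ht
    have h1 : (μ t * x t) ^ 2 ≤ 2 * M := by
      have := hVle t ht
      rw [hV t] at this
      nlinarith
    have h2 : |μ t * x t| ≤ C := by
      rw [← Real.sqrt_sq_eq_abs]
      exact Real.sqrt_le_sqrt h1
    rw [abs_mul, abs_of_pos hμt] at h2
    rw [le_div_iff₀ hμt]
    linarith [h2]
  refine ⟨⟨C, hbound⟩, ?_⟩
  -- convergence
  set g : ℝ → ℝ := fun t => C * (T - t) ^ (1 + m) / T ^ (1 + m) with hg
  have hgt : Tendsto g (𝓝[<] T) (𝓝 0) := by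
    have hcont : Continuous g := by
      apply Continuous.div_const
      exact continuous_const.mul ((continuous_const.sub continuous_id).pow _)
    have : Tendsto g (𝓝 T) (𝓝 (g T)) := hcont.tendsto T
    have hgT : g T = 0 := by
      simp [hg, sub_self, zero_pow (by omega : 1 + m ≠ 0)]
    rw [hgT] at this
    exact this.mono_left nhdsWithin_le_nhds
  apply squeeze_zero_norm' _ hgt
  have hev : ∀ᶠ t in 𝓝[<] T, t ∈ Ico (0:ℝ) T := by
    have h1 : ∀ᶠ t in 𝓝[<] T, t ∈ Ioi (0:ℝ) :=
      eventually_nhdsWithin_of_eventually_nhds (eventually_gt_nhds hT)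
    have h2 : ∀ᶠ t in 𝓝[<] T, t < T := eventually_mem_nhdsWithin
    filter_upwards [h1, h2] with t ht1 ht2
    exact ⟨le_of_lt ht1, ht2⟩
  filter_upwards [hev] with t ht
  have hμt := hμpos t ht
  have : C / μ t = g t := by
    rw [hμ t, hg]
    have h1 : (0:ℝ) < T - t := by linarith [ht.2]
    field_simp
  rw [Real.norm_eq_abs, ← this]
  exact hbound t ht
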